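/- Let N ≥ 1 and let M ⊆ ℝ^N be a compact and locally downwards closed set. Then M has only finitely many connected components. -/

import Mathlib

/-- `M` is downwards closed relative to the open set `U` and the vector `u`. -/
def DownwardsClosedRel {N : ℕ} (M U : Set (Fin N → ℝ)) (u : Fin N → ℝ) : Prop :=
  IsClosed M ∧ ∀ y ∈ U ∩ M, ∀ t : ℝ, 0 < t → y - t • u ∈ U → y - t • u ∈ interior M

/-- `M` is locally downwards closed. -/
def LocallyDownwardsClosed {N : ℕ} (M : Set (Fin N → ℝ)) : Prop :=
  IsClosed M ∧ ∀ x : Fin N → ℝ, ∃ (U : Set (Fin N → ℝ)) (u : Fin N → ℝ),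
    IsOpen U ∧ x ∈ U ∧ u ≠ 0 ∧ DownwardsClosedRel M U u

/-- Two points contained in a common preconnected subset of `M` have the same
connected component in `M`. -/
lemma sameComp {N : ℕ} {M s : Set (Fin N → ℝ)} (hs : IsPreconnected s) (hsM : s ⊆ M)
    {z w : Fin N → ℝ} (hz : z ∈ s) (hw : w ∈ s) :
    connectedComponentIn M z = connectedComponentIn M w := by
  have h1 : s ⊆ connectedComponentIn M z := hs.subset_connectedComponentIn hz hsM
  exact connectedComponentIn_eq (h1 hw)

/-- Key local lemma: near any point of `M`, all points of `M` are in the same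
connected component. -/
lemma key {N : ℕ} {M : Set (Fin N → ℝ)} (hMldc : LocallyDownwardsClosed M)
    {x : Fin N → ℝ} (hx : x ∈ M) :
    ∃ ε > 0, ∀ z ∈ M, dist z x < ε →
      connectedComponentIn M z = connectedComponentIn M x := by
  obtain ⟨U, u, hUopen, hxU, hu, _, hdc⟩ := hMldc.2 x
  obtain ⟨r, hr, hball⟩ := Metric.isOpen_iff.mp hUopen x hxU
  have hu' : (0:ℝ) < ‖u‖ := norm_pos_iff.mpr hu
  set t : ℝ := r / (4 * ‖u‖) with ht_def
  have ht : 0 < t := by positivity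
  have ht4 : t * ‖u‖ = r / 4 := by
    field_simp [ht_def]
    rw [ht_def]; field_simp [hu'.ne']
  -- any point within r/2 of x, shifted by s•u with 0 ≤ s ≤ t, is in ball x r ⊆ U
  have hshift : ∀ z : Fin N → ℝ, dist z x < r / 2 → ∀ s : ℝ, 0 ≤ s → s ≤ t →
      z - s • u ∈ U := by
    intro z hz s hs0 hst
    apply hball
    have h1 : dist (z - s • u) z = s * ‖u‖ := by
      rw [dist_eq_norm]
      simp [norm_smul, abs_of_nonneg hs0]
    have h2 : dist (z - s • u) x ≤ s * ‖u‖ + dist z x := by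
      calc dist (z - s • u) x ≤ dist (z - s • u) z + dist z x := dist_triangle _ _ _
        _ = s * ‖u‖ + dist z x := by rw [h1]
    have h3 : s * ‖u‖ ≤ r / 4 := by
      rw [← ht4]
      exact mul_le_mul_of_nonneg_right hst (le_of_lt hu')
    have : dist (z - s • u) x < r / 4 + r / 2 := by linarith
    calc dist (z - s • u) x < r / 4 + r / 2 := this
      _ ≤ r := by linarith
  -- segments going down are preconnected subsets of M
  have hseg : ∀ z ∈ M, dist z x < r / 2 →
      connectedComponentIn M z = connectedComponentIn M (z - t • u) := by
    intro z hzM hzx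
    set A : Set (Fin N → ℝ) := (fun s : ℝ => z - s • u) '' Set.Icc 0 t with hA
    have hcont : Continuous (fun s : ℝ => z - s • u) :=
      continuous_const.sub (continuous_id.smul continuous_const)
    have hAconn : IsPreconnected A :=
      isPreconnected_Icc.image _ hcont.continuousOn
    have hAM : A ⊆ M := by
      rintro w ⟨s, ⟨hs0, hst⟩, rfl⟩
      rcases eq_or_lt_of_le hs0 with h | h
      · simp [← h, hzM]
      · have hzU : z ∈ U := by simpa using hshift z hzx 0 le_rfl ht.le
        exact interior_subset (hdc z ⟨hzU, hzM⟩ s h (hshift z hzx s hs0 hst))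
    have hzA : z ∈ A := ⟨0, ⟨le_rfl, le_of_lt ht⟩, by simp⟩
    have hzA' : z - t • u ∈ A := ⟨t, ⟨le_of_lt ht, le_rfl⟩, rfl⟩
    exact sameComp hAconn hAM hzA hzA'
  -- x - t•u is an interior point
  have hxint : x - t • u ∈ interior M := by
    refine hdc x ⟨hxU, hx⟩ t ht ?_
    exact hshift x (by simpa using by positivity) t (le_of_lt ht) le_rfl
  obtain ⟨δ, hδ, hδball⟩ := Metric.isOpen_iff.mp isOpen_interior _ hxint
  refine ⟨min δ (r / 2), lt_min hδ (by linarith), ?_⟩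
  intro z hzM hzx
  have hzx2 : dist z x < r / 2 := lt_of_lt_of_le hzx (min_le_right _ _)
  have hzδ : dist z x < δ := lt_of_lt_of_le hzx (min_le_left _ _)
  have h1 := hseg z hzM hzx2
  have h2 := hseg x hx (by simpa using by positivity)
  -- both z - t•u and x - t•u are in the ball of radius δ around x - t•u, inside interior M
  have hballM : Metric.ball (x - t • u) δ ⊆ M :=
    fun w hw => interior_subset (hδball hw)
  have hballconn : IsPreconnected (Metric.ball (x - t • u) δ) :=
    (convex_ball _ _).isPreconnected
  have hz' : z - t • u ∈ Metric.ball (x - t • u) δ := by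
    simp only [Metric.mem_ball]
    have : dist (z - t • u) (x - t • u) = dist z x := dist_sub_right z x (t • u)
    rw [this]; exact hzδ
  have hx' : x - t • u ∈ Metric.ball (x - t • u) δ := Metric.mem_ball_self hδ
  have h3 : connectedComponentIn M (z - t • u) = connectedComponentIn M (x - t • u) :=
    sameComp hballconn hballM hz' hx'
  rw [h1, h3, ← h2]

/-- A compact, locally downwards closed subset of `ℝ^N` has only finitely many
connected components. -/
theorem statement7 {N : ℕ} (hN : 1 ≤ N) (M : Set (Fin N → ℝ))
    (hMcpt : IsCompact M) (hMldc : LocallyDownwardsClosed M) :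
    {C : Set (Fin N → ℝ) | ∃ x ∈ M, C = connectedComponentIn M x}.Finite := by
  choose! ε hε hε' using fun x (hx : x ∈ M) => key hMldc hx
  have hcover : M ⊆ ⋃ x ∈ M, Metric.ball x (ε x) := by
    intro x hx
    exact Set.mem_biUnion hx (Metric.mem_ball_self (hε x hx))
  obtain ⟨F, hFM, hFfin, hFcover⟩ := hMcpt.elim_finite_subcover_image
    (fun x _ => Metric.isOpen_ball) hcover
  apply Set.Finite.subset (hFfin.image (fun x => connectedComponentIn M x))
  rintro C ⟨y, hyM, rfl⟩
  obtain ⟨x, hxF, hy⟩ := Set.mem_iUnion₂.mp (hFcover hyM)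
  exact ⟨x, hxF, (hε' x (hFM hxF) y hyM (Metric.mem_ball.mp hy)).symm⟩
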